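/- Let A be a real m × n matrix, b ∈ ℝᵐ, λ > 0, a > 0, and 0 < μ < 1/‖A‖₂². Define C₁(x) = ‖Ax − b‖₂² + λ P_a(x), C₂(x, z) = μ(C₁(x) − ‖Ax − Az‖₂²) + ‖x − z‖₂², B_μ(z) = z + μ Aᵀ(b − Az), and let ∇₊ denote the componentwise positive part. Let (x^k) be a sequence of nonnegative vectors such that for each k, x^{k+1} is a global minimizer of C₂(·, x^k) over {x ∈ ℝⁿ : x ≥ 0}. Then every accumulation point x* of (x^k) satisfies x* ≥ 0 and is a global minimizer over all of ℝⁿ of x ↦ ‖x − ∇₊(B_μ(x*))‖₂² + λμ P_a(x); that is, x* is a fixed point of the thresholding iteration. -/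

import Mathlib

open Matrix Filter Topology

noncomputable def rho (a t : ℝ) : ℝ := a * |t| / (a * |t| + 1)

noncomputable def Pa {n : ℕ} (a : ℝ) (x : Fin n → ℝ) : ℝ := ∑ i, rho a (x i)

open scoped Classical in
noncomputable def l0 {n : ℕ} (x : Fin n → ℝ) : ℕ :=
  (Finset.univ.filter fun i => x i ≠ 0).card

def SOL {m n : ℕ} (A : Matrix (Fin m) (Fin n) ℝ) (b : Fin m → ℝ) : Set (Fin n → ℝ) :=
  {x | A.mulVec x = b ∧ 0 ≤ x}

noncomputable def sqN {n : ℕ} (v : Fin n → ℝ) : ℝ := ∑ i, (v i) ^ 2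

def projPos {n : ℕ} (v : Fin n → ℝ) : Fin n → ℝ := fun i => max 0 (v i)

noncomputable def C1 {m n : ℕ} (A : Matrix (Fin m) (Fin n) ℝ) (b : Fin m → ℝ)
    (lam a : ℝ) (x : Fin n → ℝ) : ℝ :=
  sqN (A.mulVec x - b) + lam * Pa a x

noncomputable def C2 {m n : ℕ} (A : Matrix (Fin m) (Fin n) ℝ) (b : Fin m → ℝ)
    (lam a mu : ℝ) (x z : Fin n → ℝ) : ℝ :=
  mu * (C1 A b lam a x - sqN (A.mulVec x - A.mulVec z)) + sqN (x - z)

noncomputable def Bmu {m n : ℕ} (A : Matrix (Fin m) (Fin n) ℝ) (b : Fin m → ℝ)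
    (mu : ℝ) (z : Fin n → ℝ) : Fin n → ℝ :=
  z + mu • (Aᵀ.mulVec (b - A.mulVec z))

/- ### Auxiliary lemmas -/

lemma rho_nonneg' {a : ℝ} (ha : 0 < a) (t : ℝ) : 0 ≤ rho a t := by
  unfold rho
  have h1 : 0 ≤ a * |t| := by positivity
  positivity

lemma rho_zero' (a : ℝ) : rho a 0 = 0 := by simp [rho]

lemma rho_neg' (a t : ℝ) : rho a (-t) = rho a t := by simp [rho]

lemma rho_cont {a : ℝ} (ha : 0 < a) : Continuous (rho a) := by
  apply Continuous.div
  · exact continuous_const.mul continuous_abs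
  · exact (continuous_const.mul continuous_abs).add continuous_const
  · intro t; positivity

lemma Pa_nonneg' {n : ℕ} {a : ℝ} (ha : 0 < a) (x : Fin n → ℝ) : 0 ≤ Pa a x :=
  Finset.sum_nonneg fun i _ => rho_nonneg' ha _

lemma Pa_cont {n : ℕ} {a : ℝ} (ha : 0 < a) : Continuous (Pa a (n := n)) :=
  continuous_finset_sum _ fun i _ => (rho_cont ha).comp (continuous_apply i)

lemma sqN_nonneg' {n : ℕ} (v : Fin n → ℝ) : 0 ≤ sqN v :=
  Finset.sum_nonneg fun i _ => sq_nonneg _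

lemma sqN_cont {n : ℕ} : Continuous (sqN (n := n)) :=
  continuous_finset_sum _ fun i _ => (continuous_apply i).pow 2

lemma sqN_zero' {n : ℕ} : sqN (0 : Fin n → ℝ) = 0 := by simp [sqN]

lemma mulVec_cont {m n : ℕ} (A : Matrix (Fin m) (Fin n) ℝ) :
    Continuous fun x : Fin n → ℝ => A.mulVec x := by
  apply continuous_pi
  intro i
  simp only [Matrix.mulVec, dotProduct]
  exact continuous_finset_sum _ fun j _ => continuous_const.mul (continuous_apply j)

lemma sqN_add' {n : ℕ} (v w : Fin n → ℝ) :
    sqN (v + w) = sqN v + 2 * (v ⬝ᵥ w) + sqN w := by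
  simp only [sqN, dotProduct, Pi.add_apply, Finset.mul_sum, ← Finset.sum_add_distrib]
  exact Finset.sum_congr rfl fun i _ => by ring

lemma sqN_smul' {n : ℕ} (c : ℝ) (v : Fin n → ℝ) : sqN (c • v) = c ^ 2 * sqN v := by
  simp only [sqN, Pi.smul_apply, smul_eq_mul, Finset.mul_sum]
  exact Finset.sum_congr rfl fun i _ => by ring

lemma dot_mulVec_left {m n : ℕ} (A : Matrix (Fin m) (Fin n) ℝ) (u : Fin n → ℝ) (c : Fin m → ℝ) :
    (A.mulVec u) ⬝ᵥ c = u ⬝ᵥ (Aᵀ.mulVec c) := by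
  rw [Matrix.mulVec_transpose, dotProduct_comm, Matrix.dotProduct_mulVec,
    dotProduct_comm]

open scoped Matrix.Norms.L2Operator in
lemma sqN_mulVec_le {m n : ℕ} (A : Matrix (Fin m) (Fin n) ℝ) (v : Fin n → ℝ) :
    sqN (A.mulVec v) ≤ ‖A‖ ^ 2 * sqN v := by
  have h2 : ‖(EuclideanSpace.equiv (Fin m) ℝ).symm (A.mulVec v)‖ ≤
      ‖A‖ * ‖(EuclideanSpace.equiv (Fin n) ℝ).symm v‖ :=
    A.l2_opNorm_mulVec ((EuclideanSpace.equiv (Fin n) ℝ).symm v)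
  have hv : sqN v = ‖(EuclideanSpace.equiv (Fin n) ℝ).symm v‖ ^ 2 := by
    rw [EuclideanSpace.norm_eq, Real.sq_sqrt (by positivity)]
    simp [sqN, sq_abs]
  have hAv : sqN (A.mulVec v) = ‖(EuclideanSpace.equiv (Fin m) ℝ).symm (A.mulVec v)‖ ^ 2 := by
    rw [EuclideanSpace.norm_eq, Real.sq_sqrt (by positivity)]
    simp [sqN, sq_abs]
  rw [hv, hAv]
  nlinarith [norm_nonneg ((EuclideanSpace.equiv (Fin m) ℝ).symm (A.mulVec v)),
    norm_nonneg A, norm_nonneg ((EuclideanSpace.equiv (Fin n) ℝ).symm v)]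

lemma C2_eq {m n : ℕ} (A : Matrix (Fin m) (Fin n) ℝ) (b : Fin m → ℝ)
    (lam a mu : ℝ) (x z : Fin n → ℝ) :
    C2 A b lam a mu x z =
      sqN (x - Bmu A b mu z) + lam * mu * Pa a x +
        (mu * sqN (A.mulVec z - b) - mu ^ 2 * sqN (Aᵀ.mulVec (A.mulVec z - b))) := by
  set w : Fin n → ℝ := Aᵀ.mulVec (A.mulVec z - b) with hw
  have h1 : A.mulVec x - b = A.mulVec (x - z) + (A.mulVec z - b) := by
    rw [Matrix.mulVec_sub]; abel
  have h2 : A.mulVec x - A.mulVec z = A.mulVec (x - z) := (Matrix.mulVec_sub A x z).symm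
  have h3 : x - Bmu A b mu z = (x - z) + mu • w := by
    have hb : b - A.mulVec z = -(A.mulVec z - b) := by abel
    rw [Bmu, hb, Matrix.mulVec_neg, ← hw, smul_neg]
    ext i; simp; ring
  rw [C2, C1, h1, h2, h3, sqN_add', sqN_add', dotProduct_smul, sqN_smul',
    dot_mulVec_left, ← hw]
  simp only [smul_eq_mul]
  ring

lemma onedim {lam mu a : ℝ} (hl : 0 < lam) (hmu : 0 < mu) (ha : 0 < a)
    (B t0 : ℝ) (ht0 : 0 ≤ t0)
    (hmin : ∀ t, 0 ≤ t → (t0 - B) ^ 2 + lam * mu * rho a t0 ≤ (t - B) ^ 2 + lam * mu * rho a t) :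
    ∀ s, (t0 - max 0 B) ^ 2 + lam * mu * rho a t0 ≤ (s - max 0 B) ^ 2 + lam * mu * rho a s := by
  intro s
  have hlm : 0 < lam * mu := mul_pos hl hmu
  rcases le_or_gt 0 B with hB | hB
  · rw [max_eq_right hB]
    rcases le_or_gt 0 s with hs | hs
    · exact hmin s hs
    · have h1 := hmin (-s) (by linarith)
      rw [rho_neg'] at h1
      nlinarith
  · rw [max_eq_left hB.le]
    have h0 := hmin 0 le_rfl
    rw [rho_zero'] at h0
    have hr0 := rho_nonneg' ha t0
    have ht02 : t0 ^ 2 ≤ 0 := by nlinarith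
    have ht00 : t0 = 0 := by nlinarith [sq_nonneg t0]
    subst ht00
    have := rho_nonneg' ha s
    simp [rho_zero']
    positivity

lemma coord_min {n : ℕ} (g : Fin n → ℝ → ℝ) (x : Fin n → ℝ)
    (h : ∀ y : Fin n → ℝ, 0 ≤ y → ∑ i, g i (x i) ≤ ∑ i, g i (y i))
    (hx : 0 ≤ x) (i : Fin n) : ∀ t, 0 ≤ t → g i (x i) ≤ g i t := by
  intro t ht
  have hy : (0 : Fin n → ℝ) ≤ Function.update x i t := by
    intro j
    rcases eq_or_ne j i with rfl | hj
    · simpa using ht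
    · rw [Function.update_of_ne hj]; exact hx j
  have h2 := h _ hy
  rw [Fintype.sum_eq_add_sum_compl i, Fintype.sum_eq_add_sum_compl i] at h2
  have hrest : ∑ j ∈ {i}ᶜ, g j (Function.update x i t j) = ∑ j ∈ {i}ᶜ, g j (x j) := by
    refine Finset.sum_congr rfl fun j hj => ?_
    rw [Function.update_of_ne (by simpa using hj)]
  rw [hrest, Function.update_self] at h2
  linarith

set_option maxHeartbeats 1000000 in
open scoped Matrix.Norms.L2Operator in
theorem stmt19 {m n : ℕ} (A : Matrix (Fin m) (Fin n) ℝ) (b : Fin m → ℝ)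
    (lam a mu : ℝ) (hl : 0 < lam) (ha : 0 < a)
    (hmu : 0 < mu) (hmu2 : mu < 1 / ‖A‖ ^ 2)
    (xseq : ℕ → (Fin n → ℝ)) (hpos : ∀ k, 0 ≤ xseq k)
    (hstep : ∀ k, ∀ y : Fin n → ℝ, 0 ≤ y →
      C2 A b lam a mu (xseq (k + 1)) (xseq k) ≤ C2 A b lam a mu y (xseq k))
    (xstar : Fin n → ℝ) (hcl : MapClusterPt xstar Filter.atTop xseq) :
    0 ≤ xstar ∧
    ∀ x : Fin n → ℝ,
      sqN (xstar - projPos (Bmu A b mu xstar)) + lam * mu * Pa a xstar ≤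
        sqN (x - projPos (Bmu A b mu xstar)) + lam * mu * Pa a x := by
  -- basic facts
  have hA1 : mu * ‖A‖ ^ 2 < 1 := by
    by_cases hA0 : ‖A‖ ^ 2 = 0
    · rw [hA0, div_zero] at hmu2; linarith
    · have hApos : 0 < ‖A‖ ^ 2 := lt_of_le_of_ne (by positivity) (Ne.symm hA0)
      exact (lt_div_iff₀ hApos).mp hmu2
  set c : ℝ := 1 - mu * ‖A‖ ^ 2 with hc
  have hcpos : 0 < c := by simp [hc]; linarith
  -- subsequence
  obtain ⟨ψ, hψmono, hψtend⟩ := TopologicalSpace.FirstCountableTopology.tendsto_subseq hcl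
  -- nonnegativity of xstar
  have hxstar : 0 ≤ xstar := by
    intro i
    have hti : Tendsto (fun j => xseq (ψ j) i) atTop (𝓝 (xstar i)) :=
      ((continuous_apply i).tendsto xstar).comp hψtend
    exact ge_of_tendsto' hti fun j => hpos (ψ j) i
  refine ⟨hxstar, ?_⟩
  -- C1 values
  set d : ℕ → ℝ := fun k => C1 A b lam a (xseq k) with hd
  have hd_nonneg : ∀ k, 0 ≤ d k := fun k =>
    add_nonneg (sqN_nonneg' _) (mul_nonneg hl.le (Pa_nonneg' ha _))
  -- descent
  have hdesc : ∀ k, mu * d (k + 1) + c * sqN (xseq (k + 1) - xseq k) ≤ mu * d k := by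
    intro k
    have h1 := hstep k (xseq k) (hpos k)
    have h2 : C2 A b lam a mu (xseq k) (xseq k) = mu * d k := by
      simp [C2, hd, sub_self, sqN_zero']
    have h3 : sqN (A.mulVec (xseq (k + 1)) - A.mulVec (xseq k)) ≤
        ‖A‖ ^ 2 * sqN (xseq (k + 1) - xseq k) := by
      rw [← Matrix.mulVec_sub]
      exact sqN_mulVec_le A _
    have h4 : C2 A b lam a mu (xseq (k + 1)) (xseq k) =
        mu * (d (k + 1) - sqN (A.mulVec (xseq (k + 1)) - A.mulVec (xseq k))) +
          sqN (xseq (k + 1) - xseq k) := rfl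
    rw [h2] at h1
    rw [h4] at h1
    have := sqN_nonneg' (xseq (k + 1) - xseq k)
    nlinarith
  have hdmono : Antitone d := by
    apply antitone_nat_of_succ_le
    intro k
    have h1 := hdesc k
    have h2 := sqN_nonneg' (xseq (k + 1) - xseq k)
    nlinarith
  have hdbdd : BddBelow (Set.range d) := ⟨0, fun y ⟨k, hk⟩ => hk ▸ hd_nonneg k⟩
  have hdconv : Tendsto d atTop (𝓝 (⨅ k, d k)) := tendsto_atTop_ciInf hdmono hdbdd
  -- differences tend to zero
  have hstend : Tendsto (fun k => sqN (xseq (k + 1) - xseq k)) atTop (𝓝 0) := by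
    have hgt : Tendsto (fun k => (mu / c) * (d k - d (k + 1))) atTop (𝓝 0) := by
      have h1 : Tendsto (fun k => d (k + 1)) atTop (𝓝 (⨅ k, d k)) :=
        hdconv.comp (tendsto_add_atTop_nat 1)
      have := ((hdconv.sub h1).const_mul (mu / c))
      simpa using this
    apply squeeze_zero (fun k => sqN_nonneg' _) _ hgt
    intro k
    have h1 := hdesc k
    rw [div_mul_eq_mul_div, le_div_iff₀ hcpos]
    nlinarith
  have hdiff : Tendsto (fun k => xseq (k + 1) - xseq k) atTop (𝓝 0) := by
    rw [tendsto_pi_nhds]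
    intro i
    have hsq : Tendsto (fun k => ((xseq (k + 1) - xseq k) i) ^ 2) atTop (𝓝 0) := by
      apply squeeze_zero (fun k => sq_nonneg _) _ hstend
      intro k
      exact Finset.single_le_sum (f := fun j => ((xseq (k + 1) - xseq k) j) ^ 2)
        (fun j _ => sq_nonneg _) (Finset.mem_univ i)
    have habs : Tendsto (fun k => |(xseq (k + 1) - xseq k) i|) atTop (𝓝 0) := by
      have := (Real.continuous_sqrt.tendsto 0).comp hsq
      simpa [Function.comp_def, Real.sqrt_sq_eq_abs] using this
    have h0 : (0 : Fin n → ℝ) i = 0 := rfl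
    rw [h0]
    exact (tendsto_zero_iff_abs_tendsto_zero _).mpr habs
  -- x_{ψ j + 1} → xstar
  have hψtop : Tendsto ψ atTop atTop := hψmono.tendsto_atTop
  have htend1 : Tendsto (fun j => xseq (ψ j + 1)) atTop (𝓝 xstar) := by
    have h1 : Tendsto (fun j => xseq (ψ j) + (xseq (ψ j + 1) - xseq (ψ j))) atTop
        (𝓝 (xstar + 0)) := hψtend.add (hdiff.comp hψtop)
    simpa using h1
  -- continuity of C2
  have hC2cont : Continuous fun p : (Fin n → ℝ) × (Fin n → ℝ) => C2 A b lam a mu p.1 p.2 := by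
    unfold C2 C1
    apply Continuous.add
    · apply continuous_const.mul
      apply Continuous.sub
      · exact (sqN_cont.comp (((mulVec_cont A).comp continuous_fst).sub continuous_const)).add
          (continuous_const.mul ((Pa_cont ha).comp continuous_fst))
      · exact sqN_cont.comp (((mulVec_cont A).comp continuous_fst).sub
          ((mulVec_cont A).comp continuous_snd))
    · exact sqN_cont.comp (continuous_fst.sub continuous_snd)
  -- limit of step inequality
  have hmin2 : ∀ y : Fin n → ℝ, 0 ≤ y →
      C2 A b lam a mu xstar xstar ≤ C2 A b lam a mu y xstar := by
    intro y hy
    have hL : Tendsto (fun j => C2 A b lam a mu (xseq (ψ j + 1)) (xseq (ψ j))) atTop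
        (𝓝 (C2 A b lam a mu xstar xstar)) := by
      have h := (hC2cont.tendsto (xstar, xstar)).comp (htend1.prodMk_nhds hψtend)
      simpa only [Function.comp_def] using h
    have hR : Tendsto (fun j => C2 A b lam a mu y (xseq (ψ j))) atTop
        (𝓝 (C2 A b lam a mu y xstar)) := by
      have h := (hC2cont.tendsto (y, xstar)).comp
        ((tendsto_const_nhds (x := y)).prodMk_nhds hψtend)
      simpa only [Function.comp_def] using h
    exact le_of_tendsto_of_tendsto' hL hR fun j => hstep (ψ j) y hy
  -- translate via C2_eq
  set B : Fin n → ℝ := Bmu A b mu xstar with hB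
  have hmin3 : ∀ y : Fin n → ℝ, 0 ≤ y →
      sqN (xstar - B) + lam * mu * Pa a xstar ≤ sqN (y - B) + lam * mu * Pa a y := by
    intro y hy
    have := hmin2 y hy
    rw [C2_eq, C2_eq] at this
    linarith
  -- coordinatewise
  set g : Fin n → ℝ → ℝ := fun i t => (t - B i) ^ 2 + lam * mu * rho a t with hg
  have hsum : ∀ v : Fin n → ℝ, ∑ i, g i (v i) = sqN (v - B) + lam * mu * Pa a v := by
    intro v
    simp only [hg, sqN, Pa, Pi.sub_apply, Finset.mul_sum, Finset.sum_add_distrib]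
  have hcoord : ∀ i, ∀ t, 0 ≤ t → g i (xstar i) ≤ g i t := by
    apply coord_min g xstar _ hxstar
    intro y hy
    rw [hsum, hsum]
    exact hmin3 y hy
  intro x
  have hfin : ∀ i : Fin n,
      (xstar i - max 0 (B i)) ^ 2 + lam * mu * rho a (xstar i) ≤
        (x i - max 0 (B i)) ^ 2 + lam * mu * rho a (x i) := by
    intro i
    exact onedim hl hmu ha (B i) (xstar i) (hxstar i) (fun t ht => hcoord i t ht) (x i)
  have hsum2 : ∀ v : Fin n → ℝ,
      sqN (v - projPos B) + lam * mu * Pa a v =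
        ∑ i, ((v i - max 0 (B i)) ^ 2 + lam * mu * rho a (v i)) := by
    intro v
    simp only [sqN, Pa, Pi.sub_apply, projPos, Finset.mul_sum, Finset.sum_add_distrib]
  rw [hsum2, hsum2]
  exact Finset.sum_le_sum fun i _ => hfin i
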